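/- If z₀ ∈ ℂ ∖ ((−∞, ρ̂] ∪ [ρ, ∞)) satisfies ψ(z₀) = q, then z₀ is real with z₀ ∈ [ρ̂, 0) ∪ (0, ρ], and the discriminant d is strictly positive (so in particular ζ ≠ ζ̂ and both are real). -/

import Mathlib

set_option maxHeartbeats 1000000


/-- If z₀ in the cut plane satisfies ψ(z₀) = q, then z₀ is real with
z₀ ∈ [ρ̂, 0) ∪ (0, ρ], and the discriminant d is strictly positive (so ζ ≠ ζ̂ and
both are real). -/
theorem nig_solution_real_and_discriminant_pos
    (κ σ q θ μ ρ ρhat d : ℝ) (ζ ζhat : ℂ)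
    (hκ : 0 < κ) (hσ : 0 < σ) (hq : 0 < q)
    (hρ : ρ = (-θ + Real.sqrt (θ ^ 2 + σ ^ 2 / κ)) / σ ^ 2)
    (hρhat : ρhat = (-θ - Real.sqrt (θ ^ 2 + σ ^ 2 / κ)) / σ ^ 2)
    (hd : d = θ ^ 2 + μ ^ 2 - 2 * θ * μ * (q * κ - 1) + q * σ ^ 2 * (2 - q * κ))
    (hζ : ζ = (((-θ - μ + κ * μ * q : ℝ) : ℂ) + (d : ℂ) ^ (1 / 2 : ℂ)) /
      (((κ * μ ^ 2 + σ ^ 2 : ℝ)) : ℂ))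
    (hζhat : ζhat = (((-θ - μ + κ * μ * q : ℝ) : ℂ) - (d : ℂ) ^ (1 / 2 : ℂ)) /
      (((κ * μ ^ 2 + σ ^ 2 : ℝ)) : ℂ))
    (ψ : ℂ → ℂ)
    (hψ : ∀ z : ℂ, ψ z =
      1 / (κ : ℂ) -
        (1 / (κ : ℂ)) *
          (1 - 2 * (κ : ℂ) * (θ : ℂ) * z - (κ : ℂ) * (σ : ℂ) ^ 2 * z ^ 2) ^ (1 / 2 : ℂ) +
        (μ : ℂ) * z)
    (z₀ : ℂ) (hz₀ : z₀.im ≠ 0 ∨ (ρhat < z₀.re ∧ z₀.re < ρ))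
    (hsol : ψ z₀ = (q : ℂ)) :
    z₀.im = 0 ∧
      ((ρhat ≤ z₀.re ∧ z₀.re < 0) ∨ (0 < z₀.re ∧ z₀.re ≤ ρ)) ∧
      0 < d ∧ ζ ≠ ζhat ∧ ζ.im = 0 ∧ ζhat.im = 0 := by
  have hκ0 : κ ≠ 0 := hκ.ne'
  have hσ0 : σ ≠ 0 := hσ.ne'
  have hκc : (κ:ℂ) ≠ 0 := Complex.ofReal_ne_zero.2 hκ0
  set u : ℂ := 1 - 2*(κ:ℂ)*(θ:ℂ)*z₀ - (κ:ℂ)*(σ:ℂ)^2*z₀^2 with hu_def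
  set w : ℂ := u ^ (1/2:ℂ) with hw_def
  -- real part of principal square root is nonnegative
  have hwre : 0 ≤ w.re := by
    rcases eq_or_ne u 0 with h0 | h0
    · rw [hw_def, h0, Complex.zero_cpow (by norm_num)]; simp
    · rw [hw_def, Complex.cpow_def_of_ne_zero h0, Complex.exp_re]
      have him : (Complex.log u * (1/2 : ℂ)).im = u.arg / 2 := by
        simp [Complex.mul_im, Complex.log_im]; ring
      rw [him]
      apply mul_nonneg (Real.exp_pos _).le
      apply Real.cos_nonneg_of_mem_Icc
      constructor
      · have := Complex.neg_pi_lt_arg u; linarith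
      · have := Complex.arg_le_pi u; have := Real.pi_pos; linarith
  have heq : (q:ℂ) = 1/(κ:ℂ) - (1/(κ:ℂ))*w + (μ:ℂ)*z₀ := by rw [← hsol, hψ z₀]
  have hw1 : w = 1 - (q:ℂ)*(κ:ℂ) + (κ:ℂ)*(μ:ℂ)*z₀ := by
    field_simp at heq
    linear_combination heq
  set x := z₀.re with hx_def
  set y := z₀.im with hy_def
  have hA : w.re = 1 - q*κ + κ*μ*x := by
    have h := congrArg Complex.re hw1
    simpa [Complex.mul_re] using h
  have hB : w.im = κ*μ*y := by
    have h := congrArg Complex.im hw1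
    simpa [Complex.mul_im, Complex.mul_re] using h
  have hure : u.re = 1 - 2*κ*θ*x - κ*σ^2*(x^2 - y^2) := by
    rw [hu_def]
    simp only [pow_two, Complex.sub_re, Complex.one_re, Complex.mul_re, Complex.mul_im,
      Complex.ofReal_re, Complex.ofReal_im, Complex.re_ofNat, Complex.im_ofNat]
    ring
  have huim : u.im = -(2*κ*θ*y) - κ*σ^2*(2*x*y) := by
    rw [hu_def]
    simp only [pow_two, Complex.sub_im, Complex.one_im, Complex.mul_re, Complex.mul_im,
      Complex.ofReal_re, Complex.ofReal_im, Complex.re_ofNat, Complex.im_ofNat]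
    ring
  -- Step 1: z₀ is real
  have hy0 : y = 0 := by
    by_contra hy
    have hy2 : 0 < y^2 := by positivity
    have hu0 : u ≠ 0 := by
      intro h0
      have h1 : u.re = 0 := by rw [h0]; rfl
      have h2 : u.im = 0 := by rw [h0]; rfl
      rw [hure] at h1
      rw [huim] at h2
      have h3 : (θ + σ^2*x) * (2*κ*y) = 0 := by linear_combination -h2
      rcases mul_eq_zero.1 h3 with h | h
      · have hθ : θ = -(σ^2*x) := by linarith
        rw [hθ] at h1
        nlinarith [mul_nonneg (mul_nonneg hκ.le (pow_pos hσ 2).le) (sq_nonneg x),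
          mul_nonneg (mul_nonneg hκ.le (pow_pos hσ 2).le) (sq_nonneg y)]
      · exact absurd h (mul_ne_zero (mul_ne_zero two_ne_zero hκ0) hy)
    have hww : w * w = u := by
      rw [hw_def, ← Complex.cpow_add _ _ hu0]; norm_num
    have hRe := congrArg Complex.re hww
    have hIm := congrArg Complex.im hww
    rw [Complex.mul_re] at hRe
    rw [Complex.mul_im] at hIm
    rw [hA, hB, hure] at hRe
    rw [hA, hB, huim] at hIm
    have hA0 : 0 ≤ 1 - q*κ + κ*μ*x := by rw [← hA]; exact hwre
    have e1 : (1 - q*κ + κ*μ*x)*μ = -(θ + σ^2*x) := by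
      have h3 : ((1 - q*κ + κ*μ*x)*μ + (θ + σ^2*x)) * (2*κ*y) = 0 := by
        linear_combination hIm
      rcases mul_eq_zero.1 h3 with h | h
      · linarith
      · exact absurd h (mul_ne_zero (mul_ne_zero two_ne_zero hκ0) hy)
    have e2 : (1 - q*κ + κ*μ*x)*(σ^2 + κ*μ^2) = (1 - q*κ)*σ^2 - κ*μ*θ := by
      linear_combination (κ*μ)*e1
    have e3 : x*(σ^2 + κ*μ^2) = -(θ + μ*(1 - q*κ)) := by
      linear_combination e1
    have e4 : (1 - q*κ + κ*μ*x)^2 = 1 - 2*κ*θ*x - κ*σ^2*x^2 + κ*(σ^2 + κ*μ^2)*y^2 := by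
      linear_combination hRe
    have hS : 0 < σ^2 + κ*μ^2 := by positivity
    have hEp : 0 ≤ (1 - q*κ)*σ^2 - κ*μ*θ := by
      have := mul_nonneg hA0 hS.le
      rw [e2] at this; exact this
    have hEsq : ((1 - q*κ)*σ^2 - κ*μ*θ)^2 < (σ^2 + κ*θ^2)*(σ^2 + κ*μ^2) := by
      have key : (σ^2 + κ*θ^2)*(σ^2 + κ*μ^2) - ((1 - q*κ)*σ^2 - κ*μ*θ)^2
          = κ*σ^2*(θ+μ)^2 + 2*(((1 - q*κ)*σ^2 - κ*μ*θ)*(q*κ*σ^2)) + (q*κ*σ^2)^2 := by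
        ring
      have k1 : 0 ≤ κ*σ^2*(θ+μ)^2 := by positivity
      have k2 : 0 ≤ ((1 - q*κ)*σ^2 - κ*μ*θ)*(q*κ*σ^2) := mul_nonneg hEp (by positivity)
      have k3 : 0 < (q*κ*σ^2)^2 := by positivity
      linarith
    have hid : κ*σ^2*d = (σ^2 + κ*θ^2)*(σ^2 + κ*μ^2) - ((1 - q*κ)*σ^2 - κ*μ*θ)^2 := by
      rw [hd]; ring
    have hdpos : 0 < d := by
      have hpos : 0 < κ*σ^2*d := by rw [hid]; linarith
      have h2 : (0:ℝ) < κ*σ^2 := by positivity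
      have heqd : d = κ*σ^2*d/(κ*σ^2) := by field_simp
      rw [heqd]; exact div_pos hpos h2
    have hκSd : κ*(σ^2 + κ*μ^2)*d = -(κ*(σ^2 + κ*μ^2)^3*y^2) := by
      rw [hd]
      linear_combination (2*κ*θ*(σ^2+κ*μ^2) + κ*σ^2*(x*(σ^2+κ*μ^2) - (θ+μ*(1-q*κ))))*e3
        - (σ^2+κ*μ^2)^2*e4
        + ((1-q*κ+κ*μ*x)*(σ^2+κ*μ^2) + (1-q*κ)*σ^2-κ*μ*θ)*e2
    have l1 : 0 < κ*(σ^2 + κ*μ^2)*d := mul_pos (mul_pos hκ hS) hdpos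
    have l2 : 0 < κ*(σ^2 + κ*μ^2)^3*y^2 := by positivity
    linarith
  -- Step 2: real analysis on the interval
  have hz : ρhat < x ∧ x < ρ := hz₀.resolve_left (not_not_intro hy0)
  have hr2 : Real.sqrt (θ^2 + σ^2/κ)^2 = θ^2 + σ^2/κ := Real.sq_sqrt (by positivity)
  have hσ2 : (0:ℝ) < σ^2 := by positivity
  have hp : 0 < 1 - 2*κ*θ*x - κ*σ^2*x^2 := by
    have l1 : σ^2*x + θ < Real.sqrt (θ^2 + σ^2/κ) := by
      have h2 := hz.2
      rw [hρ, lt_div_iff₀ hσ2] at h2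
      linarith
    have l2 : -Real.sqrt (θ^2 + σ^2/κ) < σ^2*x + θ := by
      have h2 := hz.1
      rw [hρhat, div_lt_iff₀ hσ2] at h2
      linarith
    have lsq : (σ^2*x + θ)^2 < θ^2 + σ^2/κ := by
      rw [← hr2]; nlinarith [l1, l2]
    have lsq2 : κ*(σ^2*x + θ)^2 < κ*θ^2 + σ^2 := by
      have h3 := mul_lt_mul_of_pos_left lsq hκ
      have h4 : κ*(θ^2 + σ^2/κ) = κ*θ^2 + σ^2 := by field_simp
      linarith
    have idp : σ^2*(1 - 2*κ*θ*x - κ*σ^2*x^2) = κ*θ^2 + σ^2 - κ*(σ^2*x + θ)^2 := by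
      ring
    have hp2 : 0 < σ^2*(1 - 2*κ*θ*x - κ*σ^2*x^2) := by linarith
    have h5 : (1 - 2*κ*θ*x - κ*σ^2*x^2) = σ^2*(1 - 2*κ*θ*x - κ*σ^2*x^2)/σ^2 := by
      field_simp
    rw [h5]; exact div_pos hp2 hσ2
  have hu0 : u ≠ 0 := by
    intro h0
    have h1 : u.re = 0 := by rw [h0]; rfl
    rw [hure, hy0] at h1
    nlinarith [hp]
  have hww : w * w = u := by
    rw [hw_def, ← Complex.cpow_add _ _ hu0]; norm_num
  have hRe := congrArg Complex.re hww
  rw [Complex.mul_re] at hRe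
  rw [hA, hB, hure, hy0] at hRe
  have hA0 : 0 ≤ 1 - q*κ + κ*μ*x := by rw [← hA]; exact hwre
  have e4r : (1 - q*κ + κ*μ*x)^2 = 1 - 2*κ*θ*x - κ*σ^2*x^2 := by
    linear_combination hRe
  have hS : 0 < σ^2 + κ*μ^2 := by positivity
  have hkd : κ*d = κ*((σ^2 + κ*μ^2)*x + (θ + μ*(1 - q*κ)))^2
      + (σ^2 + κ*μ^2)*((1 - 2*κ*θ*x - κ*σ^2*x^2) - (1 - q*κ + κ*μ*x)^2) := by
    rw [hd]; ring
  have hdpos : 0 < d := by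
    by_cases hc : (σ^2 + κ*μ^2)*x + (θ + μ*(1 - q*κ)) = 0
    · exfalso
      have e2r : (1 - q*κ + κ*μ*x)*(σ^2 + κ*μ^2) = (1 - q*κ)*σ^2 - κ*μ*θ := by
        linear_combination (κ*μ)*hc
      have hEp : 0 ≤ (1 - q*κ)*σ^2 - κ*μ*θ := by
        have := mul_nonneg hA0 hS.le
        rw [e2r] at this; exact this
      have hEsq : ((1 - q*κ)*σ^2 - κ*μ*θ)^2 < (σ^2 + κ*θ^2)*(σ^2 + κ*μ^2) := by
        have key : (σ^2 + κ*θ^2)*(σ^2 + κ*μ^2) - ((1 - q*κ)*σ^2 - κ*μ*θ)^2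
            = κ*σ^2*(θ+μ)^2 + 2*(((1 - q*κ)*σ^2 - κ*μ*θ)*(q*κ*σ^2)) + (q*κ*σ^2)^2 := by
          ring
        have k1 : 0 ≤ κ*σ^2*(θ+μ)^2 := by positivity
        have k2 : 0 ≤ ((1 - q*κ)*σ^2 - κ*μ*θ)*(q*κ*σ^2) := mul_nonneg hEp (by positivity)
        have k3 : 0 < (q*κ*σ^2)^2 := by positivity
        linarith
      have hd0 : d = 0 := by
        rw [hc, ← e4r] at hkd
        have : κ * d = 0 := by linear_combination hkd
        exact (mul_eq_zero.1 this).resolve_left hκ0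
      have hid : κ*σ^2*d = (σ^2 + κ*θ^2)*(σ^2 + κ*μ^2) - ((1 - q*κ)*σ^2 - κ*μ*θ)^2 := by
        rw [hd]; ring
      rw [hd0] at hid
      linarith
    · have h2 : 0 < ((σ^2 + κ*μ^2)*x + (θ + μ*(1 - q*κ)))^2 := by positivity
      rw [← e4r] at hkd
      have hκd : 0 < κ*d := by nlinarith [mul_pos hκ h2]
      have h6 : d = κ*d/κ := by field_simp
      rw [h6]; exact div_pos hκd hκ
  have hx0 : x ≠ 0 := by
    intro h
    rw [h] at e4r hA0
    nlinarith [mul_pos hq hκ]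
  have hmem : (ρhat ≤ x ∧ x < 0) ∨ (0 < x ∧ x ≤ ρ) := by
    rcases lt_or_gt_of_ne hx0 with h | h
    · exact Or.inl ⟨hz.1.le, h⟩
    · exact Or.inr ⟨h, hz.2.le⟩
  -- Step 3: ζ and ζhat
  have hdc : (d:ℂ) ^ (1/2:ℂ) = ((Real.sqrt d : ℝ) : ℂ) := by
    rw [Real.sqrt_eq_rpow, Complex.ofReal_cpow hdpos.le]
    norm_num
  have hsd : 0 < Real.sqrt d := Real.sqrt_pos.2 hdpos
  have hSne : κ*μ^2 + σ^2 ≠ 0 := by positivity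
  have hζ' : ζ = (((-θ - μ + κ*μ*q + Real.sqrt d)/(κ*μ^2 + σ^2) : ℝ) : ℂ) := by
    rw [hζ, hdc]; push_cast; ring
  have hζhat' : ζhat = (((-θ - μ + κ*μ*q - Real.sqrt d)/(κ*μ^2 + σ^2) : ℝ) : ℂ) := by
    rw [hζhat, hdc]; push_cast; ring
  have hne : ζ ≠ ζhat := by
    rw [hζ', hζhat']
    intro h
    have h2 := Complex.ofReal_inj.1 h
    rw [div_eq_div_iff hSne hSne] at h2
    nlinarith [mul_pos hsd (lt_of_le_of_ne (by positivity) (Ne.symm hSne))]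
  exact ⟨hy0, hmem, hdpos, hne, by rw [hζ']; exact Complex.ofReal_im _,
    by rw [hζhat']; exact Complex.ofReal_im _⟩
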